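/- arXiv:1209.2384 — 2 statements merged into one kernel-verified Lean document; each statement's English description precedes it below -/
import Mathlib

section
/- Fix a natural number n and let P₀([n]) be the poset of nonempty subsets of [n] = {0, …, n}, viewed as a category via inclusions. The functor TopCat ⥤ Fun(P₀([n]), TopCat) sending a topological space X to the punctured cube S ↦ X × Δ^S (with the morphism for an inclusion S ⊆ T given by id_X × (the face inclusion Δ^S ↪ Δ^T), and with a continuous map f : X → Y sent to the family f × id_{Δ^S}) admits a right adjoint. (The right adjoint is the Bousfield–Kan model for the homotopy limit of a punctured cube, 𝒳 ↦ the space of natural families of maps Δ^S → 𝒳(S), i.e. the end ∫_S C(Δ^S, 𝒳(S)).) -/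
open CategoryTheory Limits

/-- The poset `P₀([n])` of nonempty subsets of `[n] = {0, …, n}`, viewed as a category
via inclusions. -/
abbrev PosetP0 (n : ℕ) := {S : Finset (Fin (n + 1)) // S.Nonempty}

/-- The topological standard simplex `Δ^S` on vertex set `S ⊆ [n]`: probability vectors
on `[n]` supported in `S` (the ambient model of the simplex `{t : S → ℝ | t ≥ 0, ∑ t = 1}`,
realized inside `ℝ^{[n]}` so that face inclusions are literally extensions by zero). -/
def simplexOn (n : ℕ) (S : Finset (Fin (n + 1))) : TopCat :=
  TopCat.of {t : Fin (n + 1) → ℝ //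
    (∀ i, 0 ≤ t i) ∧ (∀ i, i ∉ S → t i = 0) ∧ ∑ i, t i = 1}

/-- The face inclusion `Δ^S ↪ Δ^T` induced by an inclusion `S ⊆ T`
(extension of coordinates by zero). -/
def faceIncl {n : ℕ} {S T : Finset (Fin (n + 1))} (h : S ⊆ T) :
    simplexOn n S ⟶ simplexOn n T :=
  TopCat.ofHom ⟨fun t => ⟨t.val, t.2.1, fun i hi => t.2.2.1 i (fun hS => hi (h hS)), t.2.2.2⟩,
    Continuous.subtype_mk continuous_subtype_val _⟩

/-- The punctured cube `S ↦ X × Δ^S`, with structure maps `id_X × (face inclusion)`. -/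
def prodSimplexCube (n : ℕ) (X : TopCat) : PosetP0 n ⥤ TopCat where
  obj S := TopCat.of (↑X × ↑(simplexOn n S.val))
  map {S T} f := TopCat.ofHom (ContinuousMap.prodMap (ContinuousMap.id X) (faceIncl (leOfHom f)).hom)
  map_id S := by ext p <;> rfl
  map_comp f g := by ext p <;> rfl

/-- STATEMENT 8 functor: `TopCat ⥤ Fun(P₀([n]), TopCat)`, sending `X` to the punctured
cube `S ↦ X × Δ^S` and a continuous map `f : X → Y` to the family `f × id_{Δ^S}`. -/
def prodSimplexCubeFunctor (n : ℕ) : TopCat ⥤ (PosetP0 n ⥤ TopCat) where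
  obj X := prodSimplexCube n X
  map {X Y} f :=
    { app := fun S => TopCat.ofHom (ContinuousMap.prodMap f.hom (ContinuousMap.id _))
      naturality := by intro S T g; ext p <;> rfl }
  map_id X := by
    apply NatTrans.ext; funext S; ext p <;> rfl
  map_comp f g := by
    apply NatTrans.ext; funext S; ext p <;> rfl

instance simplexOn.compactSpace (n : ℕ) (S : Finset (Fin (n + 1))) :
    CompactSpace {t : Fin (n + 1) → ℝ //
      (∀ i, 0 ≤ t i) ∧ (∀ i, i ∉ S → t i = 0) ∧ ∑ i, t i = 1} := by
  have hc : IsCompact {t : Fin (n + 1) → ℝ |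
      (∀ i, 0 ≤ t i) ∧ (∀ i, i ∉ S → t i = 0) ∧ ∑ i, t i = 1} := by
    apply IsCompact.of_isClosed_subset (isCompact_Icc (a := (0 : Fin (n+1) → ℝ)) (b := 1))
    · rw [Set.setOf_and, Set.setOf_and]
      refine IsClosed.inter ?_ (IsClosed.inter ?_ ?_)
      · rw [Set.setOf_forall]
        exact isClosed_iInter fun i => isClosed_le continuous_const (continuous_apply i)
      · rw [Set.setOf_forall]
        refine isClosed_iInter fun i => ?_
        by_cases hi : i ∈ S
        · simp [hi]
        · simpa [hi] using isClosed_eq (continuous_apply i) continuous_const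
      · exact isClosed_eq (by continuity) continuous_const
    · rintro t ⟨h1, h2, h3⟩
      refine ⟨h1, fun i => ?_⟩
      calc t i ≤ ∑ j, t j := Finset.single_le_sum (fun j _ => h1 j) (Finset.mem_univ i)
      _ = 1 := h3
  exact isCompact_iff_compactSpace.mp hc

instance simplexOn.locallyCompactSpace (n : ℕ) (S : Finset (Fin (n + 1))) :
    LocallyCompactSpace {t : Fin (n + 1) → ℝ //
      (∀ i, 0 ≤ t i) ∧ (∀ i, i ∉ S → t i = 0) ∧ ∑ i, t i = 1} :=
  inferInstance

instance (n : ℕ) (S : Finset (Fin (n + 1))) : LocallyCompactSpace (simplexOn n S) :=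
  simplexOn.locallyCompactSpace n S

/-- The Bousfield–Kan homotopy limit of a punctured cube: the space of natural families
of maps `Δ^S → 𝒳(S)`, i.e. the end `∫_S C(Δ^S, 𝒳(S))`. -/
def holimObj (n : ℕ) (𝒳 : PosetP0 n ⥤ TopCat) : TopCat :=
  TopCat.of {f : ∀ S : PosetP0 n, C(simplexOn n S.1, 𝒳.obj S) //
    ∀ (S T : PosetP0 n) (h : S ⟶ T) (t : simplexOn n S.1),
      (𝒳.map h) (f S t) = f T (faceIncl (leOfHom h) t)}

/-- The adjunction hom-equivalence: maps of cubes `X × Δ^• ⟶ 𝒳` correspond to maps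
`X ⟶ holim 𝒳`, by currying. -/
def holimHomEquiv (n : ℕ) (X : TopCat) (𝒳 : PosetP0 n ⥤ TopCat) :
    (prodSimplexCube n X ⟶ 𝒳) ≃ (X ⟶ holimObj n 𝒳) where
  toFun η :=
    TopCat.ofHom ⟨fun x => ⟨fun S => (η.app S).hom.curry x, fun S T h t => by
        have := congrArg (fun (f : (prodSimplexCube n X).obj S ⟶ 𝒳.obj T) => f (x, t))
          (η.naturality h)
        exact this.symm⟩,
      by
        apply Continuous.subtype_mk
        exact continuous_pi fun S => ((η.app S).hom.curry).continuous⟩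
  invFun g :=
    { app := fun S => TopCat.ofHom (ContinuousMap.uncurry
        ⟨fun x => (g x).1 S, (continuous_apply S).comp (continuous_subtype_val.comp g.hom.continuous)⟩)
      naturality := fun S T h => by
        ext p
        exact ((g p.1).2 S T h p.2).symm }
  left_inv η := by
    apply NatTrans.ext; funext S; ext p <;> rfl
  right_inv g := by
    apply TopCat.hom_ext; apply ContinuousMap.ext; intro x; rfl

/-- the functor `X ↦ (S ↦ X × Δ^S)` admits a right adjoint (the
Bousfield–Kan model for the homotopy limit of a punctured cube). -/
theorem prodSimplexCubeFunctor_isLeftAdjoint (n : ℕ) :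
    (prodSimplexCubeFunctor n).IsLeftAdjoint := by
  refine ⟨_, ⟨Adjunction.adjunctionOfEquivRight
    (F := prodSimplexCubeFunctor n) (G_obj := holimObj n)
    (fun X 𝒳 => holimHomEquiv n X 𝒳) ?_⟩⟩
  intro X' X 𝒳 f g
  apply TopCat.hom_ext; apply ContinuousMap.ext; intro x
  rfl
end

section
/- Fix a natural number n and let P₀([n]) be the poset of nonempty subsets of [n] = {0, …, n}, viewed as a category via inclusions. Work in the category Top_* of pointed topological spaces (topological spaces with a chosen basepoint and basepoint-preserving continuous maps, e.g. realized as the under category of the one-point space in TopCat). For a pointed space X, define the contravariant diagram V_X : P₀([n])ᵒᵖ ⥤ Top_* by V_X(S) := {f ∈ C(Δ^S, X) | f(e_s) = basepoint of X for every vertex s ∈ S}, topologized as a subspace of the compact-open mapping space and pointed by the constant map at the basepoint, with an inclusion S ⊆ T acting by restriction along the face inclusion Δ^S ↪ Δ^T. Then V_X(S) is a one-point space whenever S is a singleton (so V_X is a co-reduced diagram), and the resulting functor R^n : Top_* ⥤ coRedFun_n, X ↦ V_X, into the full subcategory coRedFun_n of Fun(P₀([n])ᵒᵖ, Top_*) spanned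 by diagrams whose value at every singleton is a one-point (zero) object, admits a left adjoint L^n. -/
open CategoryTheory Limits

/-- The singleton `{j}` as an object of `P₀([n])`. -/
def singletonObj (n : ℕ) (j : Fin (n + 1)) : PosetP0 n :=
  ⟨{j}, Finset.singleton_nonempty j⟩

/-- The vertex `e_j ∈ Δ^S` attached to `j ∈ S`. -/
def vertexPt {n : ℕ} (S : PosetP0 n) (j : ↥(S.val)) : ↑(simplexOn n S.val) :=
  ⟨fun i => if i = j.val then 1 else 0,
    fun i => by dsimp only; split <;> norm_num,
    fun i hi => by dsimp only; rw [if_neg]; rintro rfl; exact hi j.2,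
    by simp⟩

/-- The category of pointed topological spaces, realized as the under category of the
one-point space in `TopCat`. -/
abbrev PtdTop : Type 1 := Under (TopCat.of PUnit)

/-- The basepoint of a pointed space. -/
def basept (X : PtdTop) : ↑X.right := X.hom PUnit.unit

lemma basept_map {X Y : PtdTop} (f : X ⟶ Y) : f.right (basept X) = basept Y := by
  have hw := Under.w f
  show f.right (X.hom PUnit.unit) = Y.hom PUnit.unit
  rw [← hw]
  rfl

/-- `V_X(S)`: the space of continuous maps `Δ^S → X` sending every vertex of `Δ^S`
to the basepoint of `X`, topologized as a subspace of the compact-open mapping space. -/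
def VSet (n : ℕ) (X : PtdTop) (S : PosetP0 n) : Type :=
  {f : C(↑(simplexOn n S.val), ↑X.right) // ∀ j : ↥(S.val), f (vertexPt S j) = basept X}

instance (n : ℕ) (X : PtdTop) (S : PosetP0 n) : TopologicalSpace (VSet n X S) :=
  instTopologicalSpaceSubtype

/-- `V_X(S)` as a pointed space, pointed by the constant map at the basepoint. -/
def VObj (n : ℕ) (X : PtdTop) (S : PosetP0 n) : PtdTop :=
  Under.mk (Y := TopCat.of (VSet n X S))
    (TopCat.ofHom ⟨fun _ => ⟨ContinuousMap.const _ (basept X), fun _ => rfl⟩, continuous_const⟩)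

/-- Restriction `V_X(S) → V_X(T)` along the face inclusion `Δ^T ↪ Δ^S`, for `T ⊆ S`. -/
def VRes (n : ℕ) (X : PtdTop) {S T : PosetP0 n} (g : T ⟶ S) :
    VObj n X S ⟶ VObj n X T :=
  Under.homMk
    (TopCat.ofHom ⟨fun φ => ⟨φ.val.comp (faceIncl (leOfHom g)).hom,
        fun j => φ.2 ⟨j.val, leOfHom g j.2⟩⟩,
      Continuous.subtype_mk
        ((ContinuousMap.continuous_precomp _).comp continuous_subtype_val) _⟩)
    (by ext u; exact Subtype.ext (ContinuousMap.ext fun t => rfl))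

/-- Postcomposition `V_X(S) → V_Y(S)` with a pointed map `f : X → Y`. -/
def VPost (n : ℕ) {X Y : PtdTop} (f : X ⟶ Y) (S : PosetP0 n) :
    VObj n X S ⟶ VObj n Y S :=
  Under.homMk
    (TopCat.ofHom ⟨fun φ => ⟨ContinuousMap.comp f.right.hom φ.val,
        fun j => by
          show f.right (φ.val (vertexPt S j)) = basept Y
          rw [φ.2 j, basept_map f]⟩,
      Continuous.subtype_mk
        ((ContinuousMap.continuous_postcomp _).comp continuous_subtype_val) _⟩)
    (by
      ext u
      exact Subtype.ext (ContinuousMap.ext fun t => basept_map f))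

/-- The co-reduced co-punctured cube `V_X : S ↦ V_X(S)`, contravariant in `S`. -/
def VDiagram (n : ℕ) (X : PtdTop) : (PosetP0 n)ᵒᵖ ⥤ PtdTop where
  obj S := VObj n X S.unop
  map {S T} f := VRes n X f.unop
  map_id S := by
    apply Under.UnderMorphism.ext
    ext φ
    exact Subtype.ext (ContinuousMap.ext fun t => rfl)
  map_comp f g := by
    apply Under.UnderMorphism.ext
    ext φ
    exact Subtype.ext (ContinuousMap.ext fun t => rfl)

/-- The functor `X ↦ V_X` from pointed spaces to co-punctured cubes of pointed spaces. -/
def VFunctor (n : ℕ) : PtdTop ⥤ ((PosetP0 n)ᵒᵖ ⥤ PtdTop) where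
  obj X := VDiagram n X
  map {X Y} f :=
    { app := fun S => VPost n f S.unop
      naturality := by
        intro S T g
        apply Under.UnderMorphism.ext
        ext φ
        exact Subtype.ext (ContinuousMap.ext fun t => rfl) }
  map_id X := by
    apply NatTrans.ext; funext S
    apply Under.UnderMorphism.ext
    ext φ
    exact Subtype.ext (ContinuousMap.ext fun t => rfl)
  map_comp f g := by
    apply NatTrans.ext; funext S
    apply Under.UnderMorphism.ext
    ext φ
    exact Subtype.ext (ContinuousMap.ext fun t => rfl)

/-- A diagram `𝒳 : P₀([n])ᵒᵖ ⥤ Top_*` is co-reduced if its value at every singleton is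
a one-point (zero) object. -/
def IsCoReducedPtdCube {n : ℕ} (𝒳 : (PosetP0 n)ᵒᵖ ⥤ PtdTop) : Prop :=
  ∀ j : Fin (n + 1), IsZero (𝒳.obj (Opposite.op (singletonObj n j)))


section Aux

open Opposite

/-! ### Local compactness of the simplices -/

lemma simplex_isClosed (n : ℕ) (S : Finset (Fin (n + 1))) :
    IsClosed {t : Fin (n + 1) → ℝ |
      (∀ i, 0 ≤ t i) ∧ (∀ i, i ∉ S → t i = 0) ∧ ∑ i, t i = 1} := by
  have h1 : IsClosed {t : Fin (n + 1) → ℝ | ∀ i, 0 ≤ t i} := by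
    rw [Set.setOf_forall]
    exact isClosed_iInter fun i => isClosed_le continuous_const (continuous_apply i)
  have h2 : IsClosed {t : Fin (n + 1) → ℝ | ∀ i, i ∉ S → t i = 0} := by
    rw [Set.setOf_forall]
    refine isClosed_iInter fun i => ?_
    by_cases hi : i ∈ S
    · have : {t : Fin (n + 1) → ℝ | i ∉ S → t i = 0} = Set.univ := by
        ext t; simp [hi]
      rw [this]; exact isClosed_univ
    · have : {t : Fin (n + 1) → ℝ | i ∉ S → t i = 0} = {t | t i = 0} := by
        ext t; simp [hi]
      rw [this]; exact isClosed_eq (continuous_apply i) continuous_const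
  have h3 : IsClosed {t : Fin (n + 1) → ℝ | ∑ i, t i = 1} :=
    isClosed_eq (continuous_finset_sum _ fun i _ => continuous_apply i) continuous_const
  exact h1.inter (h2.inter h3)

instance simplexOn.locallyCompact (n : ℕ) (S : Finset (Fin (n + 1))) :
    LocallyCompactSpace ↑(simplexOn n S) :=
  (simplex_isClosed n S).locallyCompactSpace

/-! ### The total space and the gluing relation -/

/-- The total space `Σ_S F(S) × Δ^S`. -/
abbrev Tot (n : ℕ) (F : (PosetP0 n)ᵒᵖ ⥤ PtdTop) : Type :=
  Σ S : PosetP0 n, ↑(F.obj (op S)).right × ↑(simplexOn n S.val)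

/-- A point of the total space which must be collapsed to the basepoint. -/
def isBase {n : ℕ} (F : (PosetP0 n)ᵒᵖ ⥤ PtdTop) (p : Tot n F) : Prop :=
  p.2.1 = basept (F.obj (op p.1)) ∨ ∃ j, p.2.2 = vertexPt p.1 j

/-- The relation defining `L(F)`. -/
inductive lrel {n : ℕ} (F : (PosetP0 n)ᵒᵖ ⥤ PtdTop) : Tot n F → Tot n F → Prop
  | glue {T S : PosetP0 n} (h : T ⟶ S) (φ : ↑(F.obj (op S)).right)
      (t : ↑(simplexOn n T.val)) :
      lrel F ⟨S, φ, faceIncl (leOfHom h) t⟩ ⟨T, (F.map h.op).right φ, t⟩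
  | base {p q : Tot n F} : isBase F p → isBase F q → lrel F p q

/-- A chosen base element of the total space. -/
def basePt0 (n : ℕ) (F : (PosetP0 n)ᵒᵖ ⥤ PtdTop) : Tot n F :=
  ⟨singletonObj n 0, basept (F.obj (op (singletonObj n 0))),
    vertexPt (singletonObj n 0) ⟨0, Finset.mem_singleton_self 0⟩⟩

lemma basePt0_isBase (n : ℕ) (F : (PosetP0 n)ᵒᵖ ⥤ PtdTop) : isBase F (basePt0 n F) :=
  Or.inl rfl

/-- The value of the left adjoint on objects. -/
def LObj (n : ℕ) (F : (PosetP0 n)ᵒᵖ ⥤ PtdTop) : PtdTop :=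
  Under.mk (Y := TopCat.of (Quot (lrel F)))
    (TopCat.ofHom ⟨fun _ => Quot.mk _ (basePt0 n F), continuous_const⟩)

lemma quot_base_eq {n : ℕ} {F : (PosetP0 n)ᵒᵖ ⥤ PtdTop} {p : Tot n F}
    (hp : isBase F p) :
    Quot.mk (lrel F) p = Quot.mk (lrel F) (basePt0 n F) :=
  Quot.sound (lrel.base hp (basePt0_isBase n F))

lemma back_base {n : ℕ} {F : (PosetP0 n)ᵒᵖ ⥤ PtdTop} {X : PtdTop}
    (p : LObj n F ⟶ X) {q : Tot n F} (hq : isBase F q) :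
    p.right (Quot.mk _ q) = basept X := by
  rw [quot_base_eq hq]
  exact basept_map p

/-! ### From natural transformations to maps out of `L(F)` -/

/-- Evaluation map on the total space induced by a natural transformation
`α : F ⟶ V_X`. -/
def totMap {n : ℕ} (F : (PosetP0 n)ᵒᵖ ⥤ PtdTop) (X : PtdTop)
    (α : F ⟶ VDiagram n X) (p : Tot n F) : ↑X.right :=
  ((α.app (op p.1)).right p.2.1).val p.2.2

lemma totMap_base {n : ℕ} {F : (PosetP0 n)ᵒᵖ ⥤ PtdTop} {X : PtdTop}
    (α : F ⟶ VDiagram n X) {p : Tot n F} (hp : isBase F p) :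
    totMap F X α p = basept X := by
  obtain ⟨S, φ, t⟩ := p
  rcases hp with hφ | ⟨j, ht⟩
  · replace hφ : φ = basept (F.obj (op S)) := hφ
    show ((α.app (op S)).right φ).val t = basept X
    rw [hφ, basept_map (α.app (op S))]
    rfl
  · replace ht : t = vertexPt S j := ht
    show ((α.app (op S)).right φ).val t = basept X
    rw [ht]
    exact ((α.app (op S)).right φ).2 j

lemma totMap_rel {n : ℕ} (F : (PosetP0 n)ᵒᵖ ⥤ PtdTop) (X : PtdTop)
    (α : F ⟶ VDiagram n X) :
    ∀ p q, lrel F p q → totMap F X α p = totMap F X α q := by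
  intro p q hr
  induction hr with
  | @glue T S h φ t =>
      have h3 : (α.app (op T)).right ((F.map h.op).right φ)
          = ((VDiagram n X).map h.op).right ((α.app (op S)).right φ) := by
        have h2 := congrArg CommaMorphism.right (α.naturality h.op)
        simp only [Under.comp_right] at h2
        exact ConcreteCategory.congr_hom h2 φ
      show ((α.app (op S)).right φ).val (faceIncl (leOfHom h) t)
          = ((α.app (op T)).right ((F.map h.op).right φ)).val t
      rw [h3]
      rfl
  | base hp hq => rw [totMap_base α hp, totMap_base α hq]

lemma totMap_continuous {n : ℕ} (F : (PosetP0 n)ᵒᵖ ⥤ PtdTop) (X : PtdTop)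
    (α : F ⟶ VDiagram n X) : Continuous (totMap F X α) := by
  apply continuous_sigma
  intro S
  have h0 : Continuous fun φ : ↑(F.obj (op S)).right =>
      ((α.app (op S)).right φ).val :=
    continuous_subtype_val.comp (α.app (op S)).right.hom.continuous
  exact continuous_eval.comp ((h0.comp continuous_fst).prodMk continuous_snd)

/-! ### From maps out of `L(F)` to natural transformations -/

/-- The uncurried form of the component of the natural transformation associated to
`p : L(F) ⟶ X`. -/
def backG {n : ℕ} (F : (PosetP0 n)ᵒᵖ ⥤ PtdTop) (X : PtdTop) (p : LObj n F ⟶ X)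
    (S : PosetP0 n) :
    C(↑(F.obj (op S)).right × ↑(simplexOn n S.val), ↑X.right) :=
  ⟨fun q => p.right (Quot.mk _ ⟨S, q⟩),
    p.right.hom.continuous.comp (continuous_quot_mk.comp continuous_sigmaMk)⟩

/-- The component at `S` of the natural transformation associated to `p : L(F) ⟶ X`. -/
def backApp {n : ℕ} (F : (PosetP0 n)ᵒᵖ ⥤ PtdTop) (X : PtdTop) (p : LObj n F ⟶ X)
    (S : PosetP0 n) : F.obj (op S) ⟶ VObj n X S :=
  Under.homMk
    (TopCat.ofHom ⟨fun φ => ⟨(backG F X p S).curry φ,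
        fun j => back_base p (Or.inr ⟨j, rfl⟩)⟩,
      Continuous.subtype_mk ((backG F X p S).curry).continuous _⟩)
    (by
      ext u
      exact Subtype.ext (ContinuousMap.ext fun t =>
        back_base p (Or.inl rfl)))

/-! ### The hom equivalence -/

/-- The adjunction equivalence `(L(F) ⟶ X) ≃ (F ⟶ V_X)`. -/
def lEquiv (n : ℕ) (F : (PosetP0 n)ᵒᵖ ⥤ PtdTop) (X : PtdTop) :
    (LObj n F ⟶ X) ≃ (F ⟶ VDiagram n X) where
  toFun p :=
    { app := fun S => backApp F X p S.unop
      naturality := by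
        intro S T g
        apply Under.UnderMorphism.ext
        ext φ
        refine Subtype.ext (ContinuousMap.ext fun t => ?_)
        exact (congrArg p.right (Quot.sound (lrel.glue g.unop φ t))).symm }
  invFun α :=
    Under.homMk
      (TopCat.ofHom ⟨Quot.lift (totMap F X α) (totMap_rel F X α),
        continuous_quot_lift _ (totMap_continuous F X α)⟩)
      (by
        ext u
        exact totMap_base α (basePt0_isBase n F))
  left_inv p := by
    apply Under.UnderMorphism.ext
    ext q
    obtain ⟨S, φ, t⟩ := q
    rfl
  right_inv α := by
    apply NatTrans.ext; funext S
    apply Under.UnderMorphism.ext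
    ext φ
    exact Subtype.ext (ContinuousMap.ext fun t => rfl)

lemma lEquiv_natural {n : ℕ} (F : (PosetP0 n)ᵒᵖ ⥤ PtdTop) {X X' : PtdTop}
    (g : X ⟶ X') (h : LObj n F ⟶ X) :
    lEquiv n F X' (h ≫ g) = lEquiv n F X h ≫ (VFunctor n).map g := by
  apply NatTrans.ext; funext S
  apply Under.UnderMorphism.ext
  ext φ
  refine Subtype.ext (ContinuousMap.ext fun t => ?_)
  show (h ≫ g).right (Quot.mk _ ⟨S.unop, φ, t⟩)
      = g.right (h.right (Quot.mk _ ⟨S.unop, φ, t⟩))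
  simp [Under.comp_right]
  rfl

/-! ### Uniqueness at singletons and co-reducedness -/

lemma simplex_singleton_eq {n : ℕ} (j : Fin (n + 1))
    (t : ↑(simplexOn n (singletonObj n j).val)) :
    t = vertexPt (singletonObj n j) ⟨j, Finset.mem_singleton_self j⟩ := by
  apply Subtype.ext
  funext i
  show t.val i = if i = j then 1 else 0
  by_cases hij : i = j
  · subst hij
    rw [if_pos rfl]
    have hsum := t.2.2.2
    rw [Finset.sum_eq_single_of_mem i (Finset.mem_univ i)
      (fun k _ hk => t.2.2.1 k (by simp [singletonObj, hk]))] at hsum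
    exact hsum
  · rw [if_neg hij]
    exact t.2.2.1 i (by simp [singletonObj, hij])

/-- `V_X({j})` is a one-point space. -/
def uniqueVSetSingleton (n : ℕ) (X : PtdTop) (j : Fin (n + 1)) :
    Unique (VSet n X (singletonObj n j)) where
  default := ⟨ContinuousMap.const _ (basept X), fun _ => rfl⟩
  uniq f := by
    apply Subtype.ext
    refine ContinuousMap.ext fun t => ?_
    show f.val t = basept X
    rw [simplex_singleton_eq j t]
    exact f.2 ⟨j, Finset.mem_singleton_self j⟩

/-- A pointed space with subsingleton carrier is a zero object. -/
lemma isZero_of_subsingleton (A : PtdTop) (h : Subsingleton ↑A.right) :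
    CategoryTheory.Limits.IsZero A := by
  constructor
  · intro Y
    refine ⟨⟨⟨Under.homMk (TopCat.ofHom ⟨fun _ => basept Y, continuous_const⟩) (by ext u; rfl)⟩,
      fun f => ?_⟩⟩
    apply Under.UnderMorphism.ext
    ext a
    have ha : a = basept A := h.elim a _
    rw [ha, basept_map f]
    rfl
  · intro Y
    refine ⟨⟨⟨Under.homMk (TopCat.ofHom ⟨fun _ => basept A, continuous_const⟩)
      (by ext u; exact h.elim _ _)⟩, fun f => ?_⟩⟩
    apply Under.UnderMorphism.ext
    ext a
    exact h.elim _ _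

lemma VDiagram_coreduced (n : ℕ) (X : PtdTop) :
    IsCoReducedPtdCube (VDiagram n X) := fun j =>
  isZero_of_subsingleton _
    (@Unique.instSubsingleton _ (uniqueVSetSingleton n X j))

end Aux

/-- `V_X(S)` is a one-point space whenever `S` is a singleton (so `V_X` is
a co-reduced diagram), and the resulting functor `R^n : Top_* ⥤ coRedFun_n`, `X ↦ V_X`,
into the full subcategory of co-reduced diagrams, admits a left adjoint `L^n`. -/
theorem VFunctor_isRightAdjoint (n : ℕ) :
    (∀ (X : PtdTop) (j : Fin (n + 1)), Nonempty (Unique (VSet n X (singletonObj n j)))) ∧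
    ∃ Rn : PtdTop ⥤ ObjectProperty.FullSubcategory (IsCoReducedPtdCube (n := n)),
      Nonempty (Rn ⋙ ObjectProperty.ι (IsCoReducedPtdCube (n := n)) ≅ VFunctor n) ∧
      Rn.IsRightAdjoint := by
  refine ⟨fun X j => ⟨uniqueVSetSingleton n X j⟩, ?_⟩
  refine ⟨ObjectProperty.lift _ (VFunctor n) (fun X => VDiagram_coreduced n X),
    ⟨ObjectProperty.liftCompιIso _ _ _⟩, ?_⟩
  exact (Adjunction.adjunctionOfEquivLeft
    (G := ObjectProperty.lift _ (VFunctor n) (fun X => VDiagram_coreduced n X))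
    (F_obj := fun F' => LObj n F'.obj)
    (fun F' X => (lEquiv n F'.obj X).trans
      ((ObjectProperty.fullyFaithfulι (IsCoReducedPtdCube (n := n))).homEquiv (X := F')
        (Y := (ObjectProperty.lift _ (VFunctor n) (fun X => VDiagram_coreduced n X)).obj X)).symm)
    (fun F' X X' g h => by
      apply (ObjectProperty.fullyFaithfulι (IsCoReducedPtdCube (n := n))).map_injective
      exact lEquiv_natural F'.obj g h)).isRightAdjoint
end
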